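/- arXiv:2403.08138 — 4 statements merged into one kernel-verified Lean document; each statement's English description precedes it below -/
import Mathlib

section
/- Let a ∈ L^∞(𝔹^n) be a separately radial function, i.e., a(z) = a(|z_1|,...,|z_n|) for almost every z. Then the Toeplitz operator T_a is diagonal with respect to the orthonormal monomial basis of H^2_α(𝔹^n): for multi-indices m ≠ m', ⟨T_a e_m, e_{m'}⟩ = 0. -/
noncomputable section
open MeasureTheory

/-- The open unit ball in `ℂⁿ`. -/
def cball (n : ℕ) : Set (Fin n → ℂ) := {z | ∑ i, ‖z i‖ ^ 2 < 1}

/-- Normalized Lebesgue measure `dv` on `ℂⁿ`, so that the unit ball has measure 1. -/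
def dv (n : ℕ) : Measure (Fin n → ℂ) :=
  (ENNReal.ofReal ((n.factorial : ℝ) / Real.pi ^ n)) • volume

/-- The normalizing constant `c_α`. -/
def cA (n : ℕ) (α : ℝ) : ℝ :=
  Real.Gamma (n + α + 1) / ((n.factorial : ℝ) * Real.Gamma (α + 1))

/-- The weighted measure `v_α = c_α (1-|z|²)^α dv(z)` on the unit ball. -/
def vA (n : ℕ) (α : ℝ) : Measure (Fin n → ℂ) :=
  ((dv n).restrict (cball n)).withDensity
    (fun z => ENNReal.ofReal (cA n α * (1 - ∑ i, ‖z i‖ ^ 2) ^ α))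

/-- The monomial `z^m`. -/
def mon (n : ℕ) (m : Fin n → ℕ) : (Fin n → ℂ) → ℂ := fun z => ∏ i, z i ^ m i

/-- The normalized monomial `e_m`. -/
def eMon (n : ℕ) (α : ℝ) (m : Fin n → ℕ) : (Fin n → ℂ) → ℂ := fun z =>
  (Real.sqrt (Real.Gamma (n + (∑ i, m i) + α + 1) /
      ((∏ i, (m i).factorial : ℕ) * Real.Gamma (n + α + 1))) : ℝ) * ∏ i, z i ^ m i

/-- A separately radial bounded symbol gives a Toeplitz operator that is diagonal with
respect to the orthonormal monomial basis: `⟨T_a e_m, e_{m'}⟩ = ∫ a e_m conj(e_{m'}) dv_α = 0`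
for `m ≠ m'`. -/
theorem toeplitz_sep_radial_diagonal (n : ℕ) (α : ℝ) (hα : -1 < α)
    (a : (Fin n → ℂ) → ℂ) (hmeas : Measurable a) (hbd : ∃ C, ∀ z, ‖a z‖ ≤ C)
    (hrad : ∀ z w : Fin n → ℂ, (∀ i, ‖z i‖ = ‖w i‖) → a z = a w)
    (m m' : Fin n → ℕ) (hmm : m ≠ m') :
    ∫ z, a z * eMon n α m z * (starRingEnd ℂ) (eMon n α m' z) ∂(vA n α) = 0 := by
  classical
  obtain ⟨i, hi⟩ : ∃ i, m i ≠ m' i := Function.ne_iff.mp hmm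
  set k : ℤ := (m i : ℤ) - (m' i : ℤ) with hk
  have hk0 : (k : ℝ) ≠ 0 := by
    rw [hk]
    push_cast
    rw [sub_ne_zero]
    exact_mod_cast hi
  set θ : ℝ := Real.pi / (k : ℝ) with hθ
  set c : Circle := Circle.exp θ with hcdef
  have hcc : (starRingEnd ℂ) (c : ℂ) = Complex.exp (-(θ * Complex.I)) := by
    rw [hcdef, Circle.coe_exp, ← Complex.exp_conj]
    congr 1
    simp [Complex.conj_ofReal]
  have hc : (c : ℂ) ^ m i * (starRingEnd ℂ) ((c : ℂ) ^ m' i) = -1 := by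
    rw [map_pow, hcc, hcdef, Circle.coe_exp, ← Complex.exp_nat_mul, ← Complex.exp_nat_mul,
      ← Complex.exp_add]
    have h1 : ((k : ℝ)) * θ = Real.pi := by
      rw [hθ]; field_simp
    have h2 : (m i : ℂ) * (↑θ * Complex.I) + (m' i : ℂ) * -(↑θ * Complex.I)
        = ↑Real.pi * Complex.I := by
      have h3 : (m i : ℂ) - (m' i : ℂ) = ((k : ℝ) : ℂ) := by rw [hk]; push_cast; ring
      have h4 : ((Real.pi : ℂ)) = ((k : ℝ) : ℂ) * (θ : ℂ) := by
        rw [← h1]; push_cast; ring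
      rw [h4, ← h3]; ring
    rw [h2, Complex.exp_pi_mul_I]
  -- the rotation measurable equiv
  set R : ℂ ≃ᵐ ℂ := (rotation c).toHomeomorph.toMeasurableEquiv with hRdef
  set e : Fin n → (ℂ ≃ᵐ ℂ) := fun j => if j = i then R else MeasurableEquiv.refl ℂ with hedef
  set T : (Fin n → ℂ) ≃ᵐ (Fin n → ℂ) := MeasurableEquiv.piCongrRight e with hTdef
  have hTapp : ∀ (z : Fin n → ℂ) (j : Fin n), T z j = if j = i then (c : ℂ) * z j else z j := by
    intro z j
    show e j (z j) = _
    by_cases h : j = i <;> simp [hedef, h, hRdef]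
  have hemp : ∀ j, MeasurePreserving (e j) volume volume := by
    intro j
    by_cases h : j = i
    · simp only [hedef, if_pos h]
      exact (rotation c).measurePreserving
    · simp only [hedef, if_neg h]
      exact MeasurePreserving.id _
  have hT : MeasurePreserving T volume volume := volume_preserving_pi hemp
  have hnorm : ∀ (z : Fin n → ℂ) (j : Fin n), ‖T z j‖ = ‖z j‖ := by
    intro z j
    rw [hTapp]
    by_cases h : j = i <;> simp [h, Circle.norm_coe]
  have hsum : ∀ z : Fin n → ℂ, ∑ j, ‖T z j‖ ^ 2 = ∑ j, ‖z j‖ ^ 2 := fun z =>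
    Finset.sum_congr rfl fun j _ => by rw [hnorm]
  have hpre : T ⁻¹' cball n = cball n := by
    ext z
    simp only [Set.mem_preimage, cball, Set.mem_setOf_eq, hsum]
  -- integrand
  set f : (Fin n → ℂ) → ℂ := fun z => a z * eMon n α m z * (starRingEnd ℂ) (eMon n α m' z)
    with hfdef
  have hprod : ∀ (z : Fin n → ℂ) (μ : Fin n → ℕ),
      (∏ j, T z j ^ μ j) = (c : ℂ) ^ μ i * ∏ j, z j ^ μ j := by
    intro z μ
    calc (∏ j, T z j ^ μ j)
        = ∏ j, ((if j = i then (c : ℂ) ^ μ j else 1) * z j ^ μ j) := by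
          refine Finset.prod_congr rfl fun j _ => ?_
          rw [hTapp]
          by_cases h : j = i <;> simp [h, mul_pow]
      _ = (∏ j, (if j = i then (c : ℂ) ^ μ j else 1)) * ∏ j, z j ^ μ j :=
          Finset.prod_mul_distrib
      _ = (c : ℂ) ^ μ i * ∏ j, z j ^ μ j := by
          rw [Finset.prod_ite_eq' Finset.univ i (fun j => (c : ℂ) ^ μ j)]
          simp
  have hfT : ∀ z, f (T z) = -(f z) := by
    intro z
    have ha : a (T z) = a z := hrad _ _ fun j => hnorm z j
    have h1 : eMon n α m (T z) = (c : ℂ) ^ m i * eMon n α m z := by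
      simp only [eMon]
      rw [hprod]
      ring
    have h2 : (starRingEnd ℂ) (eMon n α m' (T z))
        = (starRingEnd ℂ) ((c : ℂ) ^ m' i) * (starRingEnd ℂ) (eMon n α m' z) := by
      rw [← map_mul]
      congr 1
      simp only [eMon]
      rw [hprod]
      ring
    calc f (T z) = ((c : ℂ) ^ m i * (starRingEnd ℂ) ((c : ℂ) ^ m' i)) * f z := by
          simp only [hfdef, ha, h1, h2]; ring
      _ = -(f z) := by rw [hc]; ring
  -- reduce to a volume integral
  have hBall : MeasurableSet (cball n) := by
    have hco : Continuous fun z : Fin n → ℂ => ∑ j, ‖z j‖ ^ 2 := by fun_prop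
    exact (isOpen_lt hco continuous_const).measurableSet
  set w : (Fin n → ℂ) → NNReal := fun z => Real.toNNReal (cA n α * (1 - ∑ j, ‖z j‖ ^ 2) ^ α)
    with hwdef
  have hw : Measurable w := by
    have h1 : Measurable fun z : Fin n → ℂ => 1 - ∑ j, ‖z j‖ ^ 2 := by fun_prop
    exact (measurable_const.mul (h1.pow measurable_const)).real_toNNReal
  have hvA : vA n α = ((dv n).restrict (cball n)).withDensity (fun z => (w z : ENNReal)) := rfl
  have hwT : ∀ z, w (T z) = w z := by
    intro z
    simp only [hwdef, hsum]
  show (∫ z, f z ∂vA n α) = 0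
  rw [hvA, integral_withDensity_eq_integral_smul hw]
  have hdv : (dv n).restrict (cball n)
      = (ENNReal.ofReal ((n.factorial : ℝ) / Real.pi ^ n)) • (volume.restrict (cball n)) := by
    rw [dv, Measure.restrict_smul]
  rw [hdv, integral_smul_measure]
  have key : (∫ z in cball n, w z • f z ∂volume) = 0 := by
    have h5 : (∫ z in cball n, w (T z) • f (T z) ∂volume)
        = ∫ z in cball n, w z • f z ∂volume := by
      nth_rewrite 1 [← hpre]
      exact hT.setIntegral_preimage_emb T.measurableEmbedding (fun z => w z • f z) (cball n)
    have h6 : (∫ z in cball n, w (T z) • f (T z) ∂volume)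
        = -∫ z in cball n, w z • f z ∂volume := by
      have : ∀ z, w (T z) • f (T z) = -(w z • f z) := by
        intro z
        rw [hwT, hfT, smul_neg]
      simp_rw [this]
      exact integral_neg _
    have h7 := h5.symm.trans h6
    linear_combination (1/2 : ℂ) * h7
  rw [key, smul_zero]
end
end

section
/- There exist k_1 > k_2 ≥ 0 and k_3 with k_1 + k_2 = 2k_3 such that for a_0(z) = |z_1|^2|z_2|^2 on 𝔹^2 the eigenvalues satisfy γ_{a_0}(k_1,k_2) ≠ γ_{a_0}(k_3,k_3), where γ_{a_0}(k_1,k_2) = (k_1+1)(k_2+1)/((k_1+k_2+α+4)(k_1+k_2+α+3)); hence the eigenvalue function of a symmetric separately radial Toeplitz operator need not depend only on |m|. -/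
/-- There exist `k₁ > k₂ ≥ 0` and `k₃` with `k₁ + k₂ = 2k₃` such that the eigenvalues
`γ_{a₀}(k₁,k₂) = (k₁+1)(k₂+1)/((k₁+k₂+α+4)(k₁+k₂+α+3))` of the Toeplitz operator with
symbol `a₀(z) = |z₁|²|z₂|²` satisfy `γ_{a₀}(k₁,k₂) ≠ γ_{a₀}(k₃,k₃)`: the eigenvalue
function of a symmetric separately radial Toeplitz operator need not depend only on `|m|`. -/
theorem gamma_not_radial (α : ℝ) (hα : -1 < α) :
    ∃ k₁ k₂ k₃ : ℕ, k₂ < k₁ ∧ k₁ + k₂ = 2 * k₃ ∧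
      ((k₁ + 1) * (k₂ + 1) / ((k₁ + k₂ + α + 4) * (k₁ + k₂ + α + 3)) : ℝ) ≠
        ((k₃ + 1) * (k₃ + 1) / ((k₃ + k₃ + α + 4) * (k₃ + k₃ + α + 3)) : ℝ) := by
  refine ⟨2, 0, 1, by norm_num, by norm_num, ?_⟩
  have h4 : (0:ℝ) < 2 + 0 + α + 4 := by linarith
  have h3 : (0:ℝ) < 2 + 0 + α + 3 := by linarith
  push_cast
  intro h
  rw [div_eq_div_iff (by nlinarith) (by nlinarith)] at h
  nlinarith [h]
end

section
/- Let a be an anti-symmetric separately radial function, i.e., a(z) = a(|z_1|,...,|z_n|) and a(σ(z)) = Sgn(σ) a(z) for all σ ∈ S_n. If ι ∈ ℤ_+^n has two equal entries (ι_{l_1} = ι_{l_2} for some l_1 ≠ l_2), then the Toeplitz operator eigenvalue γ_a(m) = ⟨T_a e_m, e_m⟩ vanishes for every m in the S_n-orbit of ι. -/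
noncomputable section
open MeasureTheory

lemma measurableSet_cball (n : ℕ) : MeasurableSet (cball n) :=
  measurableSet_lt (Finset.measurable_sum _ fun i _ =>
    (measurable_pi_apply i).norm.pow_const 2) measurable_const

/-- Mapping a `withDensity` measure along a measurable equivalence. -/
lemma map_withDensity_comp {β : Type*} [MeasurableSpace β] {μ : Measure β}
    (T : β ≃ᵐ β) {g : β → ENNReal} (hg : Measurable g) :
    (μ.withDensity (g ∘ T)).map T = (μ.map T).withDensity g := by
  ext s hs
  rw [MeasurableEquiv.map_apply, withDensity_apply _ hs,
    withDensity_apply _ (T.measurable hs), setLIntegral_map hs hg T.measurable]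
  rfl

/-- For an anti-symmetric separately radial bounded symbol `a`, the Toeplitz eigenvalue
`γ_a(m) = ⟨T_a e_m, e_m⟩` vanishes on every `m` in the `Sₙ`-orbit of a multi-index `ι`
having two equal entries. -/
theorem toeplitz_antisymm_eigenvalue_vanishes (n : ℕ) (α : ℝ) (hα : -1 < α)
    (a : (Fin n → ℂ) → ℂ) (hmeas : Measurable a) (hbd : ∃ C, ∀ z, ‖a z‖ ≤ C)
    (hrad : ∀ z w : Fin n → ℂ, (∀ i, ‖z i‖ = ‖w i‖) → a z = a w)
    (hanti : ∀ (σ : Equiv.Perm (Fin n)) (z : Fin n → ℂ),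
      a (fun i => z (σ i)) = ((Equiv.Perm.sign σ : ℤ) : ℂ) * a z)
    (ι : Fin n → ℕ) (hrep : ∃ l₁ l₂ : Fin n, l₁ ≠ l₂ ∧ ι l₁ = ι l₂)
    (m : Fin n → ℕ) (hm : ∃ σ : Equiv.Perm (Fin n), m = fun i => ι (σ i)) :
    ∫ z, a z * eMon n α m z * (starRingEnd ℂ) (eMon n α m z) ∂(vA n α) = 0 := by
  obtain ⟨l₁, l₂, hne, heq⟩ := hrep
  obtain ⟨σ, rfl⟩ := hm
  set m : Fin n → ℕ := fun i => ι (σ i) with hmdef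
  -- the transposition
  set p : Fin n := σ.symm l₁
  set q : Fin n := σ.symm l₂
  have hpq : p ≠ q := fun h => hne (σ.symm.injective h)
  set τ : Equiv.Perm (Fin n) := Equiv.swap p q with hτ
  have hmpq : m p = m q := by
    simp only [hmdef, p, q, Equiv.apply_symm_apply]
    exact heq
  have hmτ : ∀ i, m (τ i) = m i := by
    intro i
    rcases eq_or_ne i p with rfl | hip
    · rw [hτ, Equiv.swap_apply_left]; exact hmpq.symm
    rcases eq_or_ne i q with rfl | hiq
    · rw [hτ, Equiv.swap_apply_right]; exact hmpq
    · rw [hτ, Equiv.swap_apply_of_ne_of_ne hip hiq]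
  -- the measurable equivalence permuting coordinates
  set T : (Fin n → ℂ) ≃ᵐ (Fin n → ℂ) :=
    MeasurableEquiv.piCongrLeft (fun _ => ℂ) τ with hT
  have hTapp : ∀ z : Fin n → ℂ, T z = fun j => z (τ j) := by
    intro z; funext j
    have : (T z) (τ (τ.symm j)) = z (τ.symm j) :=
      Equiv.piCongrLeft_apply_apply (fun _ => ℂ) τ z (τ.symm j)
    rw [Equiv.apply_symm_apply] at this
    simpa [hτ, Equiv.symm_swap] using this
  -- norm sums invariant
  have hsum : ∀ z : Fin n → ℂ, (∑ i, ‖(T z) i‖ ^ 2) = ∑ i, ‖z i‖ ^ 2 := by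
    intro z; rw [hTapp]
    exact Equiv.sum_comp τ (fun j => ‖z j‖ ^ 2)
  -- T preserves vA
  have hvol : MeasurePreserving T volume volume :=
    volume_measurePreserving_piCongrLeft (fun _ => ℂ) τ
  have hdv : MeasurePreserving T (dv n) (dv n) := hvol.smul_measure _
  have hpre : T ⁻¹' (cball n) = cball n := by
    ext z; simp only [Set.mem_preimage, cball, Set.mem_setOf_eq, hsum]
  have hres : MeasurePreserving T ((dv n).restrict (cball n)) ((dv n).restrict (cball n)) := by
    have := hdv.restrict_preimage (s := cball n) (measurableSet_cball n)
    rwa [hpre] at this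
  have hgmeas : Measurable fun z : Fin n → ℂ =>
      ENNReal.ofReal (cA n α * (1 - ∑ i, ‖z i‖ ^ 2) ^ α) := by
    fun_prop
  have hvA : MeasurePreserving T (vA n α) (vA n α) := by
    refine ⟨T.measurable, ?_⟩
    have hgc : (fun z : Fin n → ℂ => ENNReal.ofReal (cA n α * (1 - ∑ i, ‖z i‖ ^ 2) ^ α)) ∘ T
        = fun z => ENNReal.ofReal (cA n α * (1 - ∑ i, ‖z i‖ ^ 2) ^ α) := by
      funext z; simp only [Function.comp_apply, hsum]
    rw [vA, ← hgc, map_withDensity_comp T hgmeas, hres.map_eq, hgc]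
  -- monomials invariant
  have hemon : ∀ z : Fin n → ℂ, eMon n α m (T z) = eMon n α m z := by
    intro z
    rw [hTapp]
    unfold eMon
    congr 1
    calc ∏ i, z (τ i) ^ m i = ∏ i, z (τ i) ^ m (τ i) := by
          exact Finset.prod_congr rfl fun i _ => by rw [hmτ]
      _ = ∏ i, z i ^ m i := Equiv.prod_comp τ (fun j => z j ^ m j)
  -- a is anti-invariant
  have ha : ∀ z : Fin n → ℂ, a (T z) = -a z := by
    intro z
    rw [hTapp, hanti τ z, hτ, Equiv.Perm.sign_swap hpq]
    push_cast
    ring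
  -- conclude
  set I := ∫ z, a z * eMon n α m z * (starRingEnd ℂ) (eMon n α m z) ∂(vA n α) with hI
  have key : I = -I := by
    conv_lhs => rw [hI, ← hvA.integral_comp T.measurableEmbedding]
    rw [← integral_neg]
    apply integral_congr_ae
    filter_upwards with z
    rw [ha, hemon]
    ring
  have h2 : I + I = 0 := by linear_combination key
  exact add_self_eq_zero.mp h2
end
end

section
/- Let a be an anti-symmetric separately radial function on 𝔹^n and σ ∈ S_n an odd permutation. Then for every multi-index m ∈ ℤ_+^n, the Toeplitz eigenvalues satisfy γ_a(σ(m)) = -γ_a(m), where γ_a(m) = ⟨T_a e_m, e_m⟩ in H^2_α(𝔹^n). -/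
noncomputable section
open MeasureTheory

/-- For an anti-symmetric separately radial bounded symbol `a` and an odd permutation `σ`,
the Toeplitz eigenvalues satisfy `γ_a(σ(m)) = -γ_a(m)`. -/
theorem toeplitz_antisymm_eigenvalue_odd_perm (n : ℕ) (α : ℝ) (hα : -1 < α)
    (a : (Fin n → ℂ) → ℂ) (hmeas : Measurable a) (hbd : ∃ C, ∀ z, ‖a z‖ ≤ C)
    (hrad : ∀ z w : Fin n → ℂ, (∀ i, ‖z i‖ = ‖w i‖) → a z = a w)
    (hanti : ∀ (τ : Equiv.Perm (Fin n)) (z : Fin n → ℂ),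
      a (fun i => z (τ i)) = ((Equiv.Perm.sign τ : ℤ) : ℂ) * a z)
    (σ : Equiv.Perm (Fin n)) (hσ : Equiv.Perm.sign σ = -1) (m : Fin n → ℕ) :
    ∫ z, a z * eMon n α (fun i => m (σ i)) z *
        (starRingEnd ℂ) (eMon n α (fun i => m (σ i)) z) ∂(vA n α) =
      -∫ z, a z * eMon n α m z * (starRingEnd ℂ) (eMon n α m z) ∂(vA n α) := by
  classical
  set T : (Fin n → ℂ) ≃ᵐ (Fin n → ℂ) :=
    MeasurableEquiv.piCongrLeft (fun _ => ℂ) σ.symm with hTdef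
  have hTapp : ∀ (w : Fin n → ℂ) (i : Fin n), T w i = w (σ i) := by
    intro w i
    have h := Equiv.piCongrLeft_apply_apply (fun _ : Fin n => ℂ) σ.symm w (σ i)
    simpa [hTdef, MeasurableEquiv.coe_piCongrLeft] using h
  have hsum : ∀ w : Fin n → ℂ, ∑ i, ‖T w i‖ ^ 2 = ∑ i, ‖w i‖ ^ 2 := by
    intro w
    simp only [hTapp]
    exact Equiv.sum_comp σ fun i => ‖w i‖ ^ 2
  have hvol : MeasurePreserving T volume volume :=
    volume_measurePreserving_piCongrLeft (fun _ : Fin n => ℂ) σ.symm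
  have hmapdv : Measure.map T (dv n) = dv n := by
    rw [dv, Measure.map_smul, hvol.map_eq]
  have hpre : T ⁻¹' cball n = cball n := by
    ext z
    simp only [Set.mem_preimage, cball, Set.mem_setOf_eq, hsum]
  have hcm : MeasurableSet (cball n) := by
    have : Measurable fun z : Fin n → ℂ => ∑ i, ‖z i‖ ^ 2 := by fun_prop
    exact measurableSet_lt this measurable_const
  have hmapres : Measure.map T ((dv n).restrict (cball n)) = (dv n).restrict (cball n) := by
    rw [← hpre, ← Measure.restrict_map T.measurable hcm, hmapdv, hpre]
  set d : (Fin n → ℂ) → ENNReal :=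
    fun z => ENNReal.ofReal (cA n α * (1 - ∑ i, ‖z i‖ ^ 2) ^ α) with hddef
  have hd : Measurable d := by
    rw [hddef]
    fun_prop
  have hdT : ∀ w, d (T w) = d w := by
    intro w
    simp only [hddef, hsum]
  have hmap : Measure.map T (vA n α) = vA n α := by
    rw [vA]
    ext s hs
    rw [Measure.map_apply T.measurable hs, withDensity_apply _ (T.measurable hs),
      withDensity_apply _ hs]
    conv_rhs => rw [← hmapres, setLIntegral_map hs hd T.measurable]
    exact lintegral_congr fun x => (hdT x).symm
  have hMP : MeasurePreserving T (vA n α) (vA n α) := ⟨T.measurable, hmap⟩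
  have key := hMP.integral_comp T.measurableEmbedding
    (fun z => a z * eMon n α (fun i => m (σ i)) z *
      (starRingEnd ℂ) (eMon n α (fun i => m (σ i)) z))
  rw [← key]
  have hpt : ∀ w : Fin n → ℂ,
      a (T w) * eMon n α (fun i => m (σ i)) (T w) *
        (starRingEnd ℂ) (eMon n α (fun i => m (σ i)) (T w)) =
      -(a w * eMon n α m w * (starRingEnd ℂ) (eMon n α m w)) := by
    intro w
    have hTw : T w = fun i => w (σ i) := funext (hTapp w)
    have ha : a (T w) = -a w := by
      rw [hTw, hanti σ w, hσ]
      norm_num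
    have he : eMon n α (fun i => m (σ i)) (T w) = eMon n α m w := by
      rw [hTw]
      have hsum' : ∑ i, m (σ i) = ∑ i, m i := Equiv.sum_comp σ m
      have hprod' : ∏ i, (m (σ i)).factorial = ∏ i, (m i).factorial :=
        Equiv.prod_comp σ fun i => (m i).factorial
      have hmon : ∏ i, w (σ i) ^ m (σ i) = ∏ i, w i ^ m i :=
        Equiv.prod_comp σ fun i => w i ^ m i
      simp only [eMon, hsum', hprod', hmon]
    rw [ha, he]
    ring
  simp only [hpt]
  exact integral_neg _
end
end
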